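/- The infimum of the dual problem (D) taken over continuous triples (ψ,φ,b), with ψ ∈ C(supp(ν)), φ ∈ C([0,1]^d), b ∈ C([0,1]^d,ℝ^N) satisfying the pointwise constraint, coincides with the infimum taken over integrable triples: over φ ∈ L¹((0,1)^d), b ∈ L¹((0,1)^d;ℝ^N) and ψ(x,y) := sup_{t∈[0,1]^d}{t·y − φ(t) − b(t)·x} satisfying the same constraint. In particular the value of (D) equals inf over (φ,b) of ∫ sup_{t∈[0,1]^d}{t·y − φ(t) − b(t)·x} ν(dx,dy) + ∫_{[0,1]^d} φ dμ. -/

import Mathlib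

set_option maxHeartbeats 1000000


open MeasureTheory ProbabilityTheory Set
open scoped RealInnerProductSpace

noncomputable section

/-- The support of a measure: points all of whose neighborhoods have positive measure. -/
def measSupport {E : Type*} [TopologicalSpace E] [MeasurableSpace E] (m : Measure E) :
    Set E := {x | ∀ s ∈ nhds x, 0 < m s}

section Aux

variable {E : Type*} [MeasurableSpace E] [TopologicalSpace E]

theorem measSupport_compl_null [SecondCountableTopology E] (m : Measure E) :
    m (measSupport m)ᶜ = 0 := by
  apply measure_null_of_locally_null
  intro x hx
  simp only [measSupport, mem_compl_iff, mem_setOf_eq, not_forall] at hx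
  obtain ⟨s, hs, hpos⟩ := hx
  exact ⟨s, nhdsWithin_le_nhds hs, by simpa [pos_iff_ne_zero] using hpos⟩

theorem measSupport_closed (m : Measure E) : IsClosed (measSupport m) := by
  rw [← isOpen_compl_iff, isOpen_iff_mem_nhds]
  intro x hx
  simp only [measSupport, mem_compl_iff, mem_setOf_eq, not_forall] at hx
  obtain ⟨s, hs, hpos⟩ := hx
  rcases mem_nhds_iff.1 hs with ⟨u, hus, huo, hxu⟩
  filter_upwards [huo.mem_nhds hxu] with y hy
  simp only [measSupport, mem_compl_iff, mem_setOf_eq, not_forall]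
  exact ⟨s, mem_nhds_iff.2 ⟨u, hus, huo, hy⟩, hpos⟩

theorem measSupport_subset_closed (m : Measure E) {F : Set E} (hF : IsClosed F)
    (h : m Fᶜ = 0) : measSupport m ⊆ F := by
  intro x hx
  by_contra hxF
  have := hx Fᶜ (hF.isOpen_compl.mem_nhds hxF)
  simp [h] at this

theorem measSupport_nonempty [SecondCountableTopology E] (m : Measure E)
    [IsProbabilityMeasure m] : (measSupport m).Nonempty := by
  by_contra h
  rw [not_nonempty_iff_eq_empty] at h
  have := measSupport_compl_null m
  rw [h, compl_empty] at this
  simp [measure_univ] at this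

theorem csSup_image_le_add {α : Type*} {s : Set α} (hs : s.Nonempty) (f g : α → ℝ) (c : ℝ)
    (hB : BddAbove (g '' s)) (h : ∀ x ∈ s, f x ≤ g x + c) :
    sSup (f '' s) ≤ sSup (g '' s) + c := by
  apply csSup_le (hs.image f)
  rintro _ ⟨x, hx, rfl⟩
  exact (h x hx).trans (add_le_add_left (le_csSup hB ⟨x, hx, rfl⟩) c)

theorem continuous_sSup_of_lipschitz {ι E : Type*} [PseudoMetricSpace E] {T : Set ι}
    (hT : T.Nonempty) (F : ι → E → ℝ) {L : ℝ} (hL : 0 ≤ L)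
    (hbdd : ∀ x : E, BddAbove ((fun i => F i x) '' T))
    (hlip : ∀ i ∈ T, ∀ x y : E, F i x - F i y ≤ L * dist x y) :
    Continuous (fun x => sSup ((fun i => F i x) '' T)) := by
  have key : ∀ u v : E, sSup ((fun i => F i u) '' T) ≤ sSup ((fun i => F i v) '' T)
      + L * dist u v := by
    intro u v
    exact csSup_image_le_add hT _ _ _ (hbdd v) (fun i hi => by linarith [hlip i hi u v])
  apply (LipschitzWith.of_dist_le_mul (K := L.toNNReal) ?_).continuous
  intro x y
  rw [Real.dist_eq, abs_sub_le_iff, Real.coe_toNNReal L hL]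
  refine ⟨by linarith [key x y], ?_⟩
  rw [dist_comm x y] at *
  linarith [key y x]

end Aux

theorem dual_value_continuous_eq_integrable
    {Ωs : Type*} [MeasurableSpace Ωs] (P : Measure Ωs) [IsProbabilityMeasure P]
    {N d : ℕ}
    (X : Ωs → EuclideanSpace ℝ (Fin N)) (Y : Ωs → EuclideanSpace ℝ (Fin d))
    (hX : Measurable X) (hY : Measurable Y)
    (hXbdd : ∃ C : ℝ, ∀ ω, ‖X ω‖ ≤ C) (hYbdd : ∃ C : ℝ, ∀ ω, ‖Y ω‖ ≤ C)
    (hXcentered : ∫ ω, X ω ∂P = 0)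
    -- the cube [0,1]^d and the uniform measure μ on it
    (cube : Set (EuclideanSpace ℝ (Fin d)))
    (hcube : cube = {u : EuclideanSpace ℝ (Fin d) | ∀ i, u i ∈ Icc (0:ℝ) 1})
    (μ : Measure (EuclideanSpace ℝ (Fin d))) (hμ : μ = volume.restrict cube)
    -- ν = Law(X,Y)
    (ν : Measure (EuclideanSpace ℝ (Fin N) × EuclideanSpace ℝ (Fin d)))
    (hν : ν = Measure.map (fun ω => (X ω, Y ω)) P)
    -- the sup-form potential ψ associated with (φ, b)
    (ψsup : (EuclideanSpace ℝ (Fin d) → ℝ) → (EuclideanSpace ℝ (Fin d) → EuclideanSpace ℝ (Fin N))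
      → EuclideanSpace ℝ (Fin N) × EuclideanSpace ℝ (Fin d) → ℝ)
    (hψsup : ∀ φ b z, ψsup φ b z = sSup ((fun t => ⟪t, z.2⟫ - φ t - ⟪b t, z.1⟫) '' cube)) :
    sInf {r : ℝ |
      ∃ (ψ : EuclideanSpace ℝ (Fin N) × EuclideanSpace ℝ (Fin d) → ℝ)
        (φ : EuclideanSpace ℝ (Fin d) → ℝ)
        (b : EuclideanSpace ℝ (Fin d) → EuclideanSpace ℝ (Fin N)),
        ContinuousOn ψ (measSupport ν) ∧ ContinuousOn φ cube ∧ ContinuousOn b cube ∧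
        (∀ z ∈ measSupport ν, ∀ t ∈ cube, ψ z + φ t + ⟪b t, z.1⟫ ≥ ⟪t, z.2⟫) ∧
        r = ∫ z, ψ z ∂ν + ∫ t, φ t ∂μ} =
    sInf {r : ℝ |
      ∃ (φ : EuclideanSpace ℝ (Fin d) → ℝ)
        (b : EuclideanSpace ℝ (Fin d) → EuclideanSpace ℝ (Fin N)),
        Integrable φ μ ∧ Integrable b μ ∧ Integrable (ψsup φ b) ν ∧
        (∀ z ∈ measSupport ν, ∀ t ∈ cube, ψsup φ b z + φ t + ⟪b t, z.1⟫ ≥ ⟪t, z.2⟫) ∧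
        r = ∫ z, ψsup φ b z ∂ν + ∫ t, φ t ∂μ} := by
  -- notation
  set A := {r : ℝ |
      ∃ (ψ : EuclideanSpace ℝ (Fin N) × EuclideanSpace ℝ (Fin d) → ℝ)
        (φ : EuclideanSpace ℝ (Fin d) → ℝ)
        (b : EuclideanSpace ℝ (Fin d) → EuclideanSpace ℝ (Fin N)),
        ContinuousOn ψ (measSupport ν) ∧ ContinuousOn φ cube ∧ ContinuousOn b cube ∧
        (∀ z ∈ measSupport ν, ∀ t ∈ cube, ψ z + φ t + ⟪b t, z.1⟫ ≥ ⟪t, z.2⟫) ∧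
        r = ∫ z, ψ z ∂ν + ∫ t, φ t ∂μ} with hAdef
  set B := {r : ℝ |
      ∃ (φ : EuclideanSpace ℝ (Fin d) → ℝ)
        (b : EuclideanSpace ℝ (Fin d) → EuclideanSpace ℝ (Fin N)),
        Integrable φ μ ∧ Integrable b μ ∧ Integrable (ψsup φ b) ν ∧
        (∀ z ∈ measSupport ν, ∀ t ∈ cube, ψsup φ b z + φ t + ⟪b t, z.1⟫ ≥ ⟪t, z.2⟫) ∧
        r = ∫ z, ψsup φ b z ∂ν + ∫ t, φ t ∂μ} with hBdef
  obtain ⟨Cx₀, hCx₀⟩ := hXbdd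
  obtain ⟨Cy₀, hCy₀⟩ := hYbdd
  set Cx : ℝ := max Cx₀ 0 with hCxdef
  set Cy : ℝ := max Cy₀ 0 with hCydef
  have hCx : ∀ ω, ‖X ω‖ ≤ Cx := fun ω => (hCx₀ ω).trans (le_max_left _ _)
  have hCy : ∀ ω, ‖Y ω‖ ≤ Cy := fun ω => (hCy₀ ω).trans (le_max_left _ _)
  have hCx0 : (0:ℝ) ≤ Cx := le_max_right _ _
  have hCy0 : (0:ℝ) ≤ Cy := le_max_right _ _
  have hXYm : Measurable fun ω => (X ω, Y ω) := hX.prodMk hY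
  haveI hνprob : IsProbabilityMeasure ν := hν ▸ Measure.isProbabilityMeasure_map hXYm.aemeasurable
  -- the compact set K carrying ν
  set K := {z : EuclideanSpace ℝ (Fin N) × EuclideanSpace ℝ (Fin d) |
    ‖z.1‖ ≤ Cx ∧ ‖z.2‖ ≤ Cy} with hKdef
  have hKc : IsClosed K := by
    apply IsClosed.inter
    · exact isClosed_le continuous_fst.norm continuous_const
    · exact isClosed_le continuous_snd.norm continuous_const
  have hKnull : ν Kᶜ = 0 := by
    rw [hν, Measure.map_apply hXYm hKc.measurableSet.compl]
    convert measure_empty (μ := P)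
    ext ω
    simp only [mem_preimage, mem_compl_iff, hKdef, mem_setOf_eq, mem_empty_iff_false, iff_false,
      not_not]
    exact ⟨hCx ω, hCy ω⟩
  have hKcomp : IsCompact K := by
    have : K = Metric.closedBall (0 : EuclideanSpace ℝ (Fin N)) Cx ×ˢ
        Metric.closedBall (0 : EuclideanSpace ℝ (Fin d)) Cy := by
      ext z
      simp [hKdef, Set.mem_prod, Metric.mem_closedBall, dist_zero_right]
    rw [this]
    exact (isCompact_closedBall _ _).prod (isCompact_closedBall _ _)
  -- the support S of ν
  set S := measSupport ν with hSdef
  have hSsub : S ⊆ K := measSupport_subset_closed ν hKc hKnull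
  have hSnull : ν Sᶜ = 0 := measSupport_compl_null ν
  have hScomp : IsCompact S := hKcomp.of_isClosed_subset (measSupport_closed ν) hSsub
  have hSne : S.Nonempty := measSupport_nonempty ν
  have hSmeas : MeasurableSet S := (measSupport_closed ν).measurableSet
  have haeS : ∀ᵐ z ∂ν, z ∈ S := by rw [ae_iff]; exact hSnull
  have hrestr : ν.restrict S = ν :=
    Measure.restrict_eq_self_of_ae_mem haeS
  -- cube facts
  have hcube0 : (0 : EuclideanSpace ℝ (Fin d)) ∈ cube := by
    rw [hcube]; intro i; exact ⟨le_refl _, zero_le_one⟩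
  have hcubene : cube.Nonempty := ⟨0, hcube0⟩
  have hcubenorm : ∀ t ∈ cube, ‖t‖ ≤ Real.sqrt d := by
    intro u hu
    rw [hcube] at hu
    rw [EuclideanSpace.norm_eq]
    apply Real.sqrt_le_sqrt
    calc ∑ i, ‖u i‖ ^ 2 ≤ ∑ _i : Fin d, 1 := by
          apply Finset.sum_le_sum; intro i _
          have h0 := hu i
          have h1 : |u i| ≤ 1 := by rw [abs_le]; exact ⟨by linarith [h0.1], h0.2⟩
          calc ‖u i‖^2 = |u i|^2 := rfl
            _ ≤ 1^2 := by apply pow_le_pow_left₀ (abs_nonneg _) h1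
            _ = 1 := one_pow 2
      _ = d := by simp
  have hcubeC : IsCompact cube := by
    have h1 : IsClosed cube := by
      rw [hcube]
      have : {u : EuclideanSpace ℝ (Fin d) | ∀ i, u i ∈ Icc (0:ℝ) 1} =
          ⋂ i, (fun u : EuclideanSpace ℝ (Fin d) => u i) ⁻¹' (Icc (0:ℝ) 1) := by
        ext u; simp [Set.mem_iInter]
      rw [this]
      exact isClosed_iInter fun i => isClosed_Icc.preimage (EuclideanSpace.proj i).continuous
    have h2 : Bornology.IsBounded cube :=
      (Metric.isBounded_closedBall (x := (0 : EuclideanSpace ℝ (Fin d)))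
        (r := Real.sqrt d)).subset (by
          intro u hu
          simp only [Metric.mem_closedBall, dist_zero_right]
          exact hcubenorm u hu)
    exact Metric.isCompact_of_isClosed_isBounded h1 h2
  have hcubemeas : MeasurableSet cube := hcubeC.isClosed.measurableSet
  have hμ1 : μ univ = 1 := by
    rw [hμ, Measure.restrict_apply_univ]
    have h2 : cube = (MeasurableEquiv.toLp 2 (Fin d → ℝ)).symm ⁻¹'
        (univ.pi fun _ => Icc (0:ℝ) 1) := by
      rw [hcube]; ext u
      simp only [mem_preimage, Set.mem_pi, mem_univ, forall_true_left, mem_setOf_eq]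
      rfl
    rw [h2, (EuclideanSpace.volume_preserving_symm_measurableEquiv_toLp (Fin d)).measure_preimage
      (MeasurableSet.univ_pi fun i => measurableSet_Icc).nullMeasurableSet]
    simp [Real.volume_Icc_pi]
  haveI hμprob : IsProbabilityMeasure μ := ⟨hμ1⟩
  have hμae : ∀ᵐ t ∂μ, t ∈ cube := hμ ▸ ae_restrict_mem hcubemeas
  -- integrability helpers
  have hIntν : ∀ f : EuclideanSpace ℝ (Fin N) × EuclideanSpace ℝ (Fin d) → ℝ,
      AEStronglyMeasurable f ν → ∀ C : ℝ, (∀ z ∈ S, |f z| ≤ C) → Integrable f ν := by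
    intro f hm C hC
    exact (integrable_const C).mono' hm (by filter_upwards [haeS] with z hz using hC z hz)
  have hIntμ : ∀ f : EuclideanSpace ℝ (Fin d) → ℝ,
      AEStronglyMeasurable f μ → ∀ C : ℝ, (∀ t ∈ cube, |f t| ≤ C) → Integrable f μ := by
    intro f hm C hC
    exact (integrable_const C).mono' hm (by filter_upwards [hμae] with t ht using hC t ht)
  have hz1int : Integrable (fun z : EuclideanSpace ℝ (Fin N) × EuclideanSpace ℝ (Fin d) => z.1) ν := by
    apply (integrable_const Cx).mono' continuous_fst.aestronglyMeasurable
    filter_upwards [haeS] with z hz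
    exact (hSsub hz).1
  have hz2int : Integrable (fun z : EuclideanSpace ℝ (Fin N) × EuclideanSpace ℝ (Fin d) => z.2) ν := by
    apply (integrable_const Cy).mono' continuous_snd.aestronglyMeasurable
    filter_upwards [haeS] with z hz
    exact (hSsub hz).2
  have hEx : ∫ z : EuclideanSpace ℝ (Fin N) × EuclideanSpace ℝ (Fin d), z.1 ∂ν = 0 := by
    rw [hν, integral_map hXYm.aemeasurable (by fun_prop)]
    exact hXcentered
  set EYm : EuclideanSpace ℝ (Fin d) :=
    ∫ z : EuclideanSpace ℝ (Fin N) × EuclideanSpace ℝ (Fin d), z.2 ∂ν with hEYm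
  have hinner2 : ∀ t : EuclideanSpace ℝ (Fin d),
      ∫ z : EuclideanSpace ℝ (Fin N) × EuclideanSpace ℝ (Fin d), ⟪t, z.2⟫ ∂ν = ⟪t, EYm⟫ :=
    fun t => integral_inner hz2int t
  have hinner1 : ∀ c : EuclideanSpace ℝ (Fin N),
      ∫ z : EuclideanSpace ℝ (Fin N) × EuclideanSpace ℝ (Fin d), ⟪c, z.1⟫ ∂ν = 0 := by
    intro c
    rw [integral_inner hz1int c, hEx, inner_zero_right]
  set c₀ : ℝ := ∫ t, ⟪t, EYm⟫ ∂μ with hc₀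
  have hinnerμint : Integrable (fun t => ⟪t, EYm⟫) μ := by
    apply hIntμ _ (Continuous.aestronglyMeasurable (continuous_id.inner continuous_const))
      (Real.sqrt d * ‖EYm‖)
    intro t ht
    calc |⟪t, EYm⟫| ≤ ‖t‖ * ‖EYm‖ := abs_real_inner_le_norm t EYm
      _ ≤ Real.sqrt d * ‖EYm‖ :=
        mul_le_mul_of_nonneg_right (hcubenorm t ht) (norm_nonneg _)
  -- the uniform lower bound
  have hlb : ∀ (ψ : EuclideanSpace ℝ (Fin N) × EuclideanSpace ℝ (Fin d) → ℝ)
      (φ : EuclideanSpace ℝ (Fin d) → ℝ) (b : EuclideanSpace ℝ (Fin d) → EuclideanSpace ℝ (Fin N)),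
      Integrable ψ ν → Integrable φ μ →
      (∀ z ∈ S, ∀ t ∈ cube, ψ z + φ t + ⟪b t, z.1⟫ ≥ ⟪t, z.2⟫) →
      c₀ ≤ ∫ z, ψ z ∂ν + ∫ t, φ t ∂μ := by
    intro ψ φ b hψ hφ hcons
    have step1 : ∀ t ∈ cube, ⟪t, EYm⟫ - ∫ z, ψ z ∂ν ≤ φ t := by
      intro t ht
      have h1 : Integrable (fun z : EuclideanSpace ℝ (Fin N) × EuclideanSpace ℝ (Fin d) =>
          ⟪t, z.2⟫) ν := by
        apply hIntν _ (Continuous.aestronglyMeasurable (continuous_const.inner continuous_snd))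
          (‖t‖ * Cy)
        intro z hz
        calc |⟪t, z.2⟫| ≤ ‖t‖ * ‖z.2‖ := abs_real_inner_le_norm _ _
          _ ≤ ‖t‖ * Cy := mul_le_mul_of_nonneg_left (hSsub hz).2 (norm_nonneg _)
      have h2 : Integrable (fun z : EuclideanSpace ℝ (Fin N) × EuclideanSpace ℝ (Fin d) =>
          ⟪b t, z.1⟫) ν := by
        apply hIntν _ (Continuous.aestronglyMeasurable (continuous_const.inner continuous_fst))
          (‖b t‖ * Cx)
        intro z hz
        calc |⟪b t, z.1⟫| ≤ ‖b t‖ * ‖z.1‖ := abs_real_inner_le_norm _ _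
          _ ≤ ‖b t‖ * Cx := mul_le_mul_of_nonneg_left (hSsub hz).1 (norm_nonneg _)
      have hle : ∀ᵐ z ∂ν, ⟪t, z.2⟫ - ⟪b t, z.1⟫ - ψ z ≤ φ t := by
        filter_upwards [haeS] with z hz
        have := hcons z hz t ht
        linarith
      have h12 : Integrable (fun z : EuclideanSpace ℝ (Fin N) × EuclideanSpace ℝ (Fin d) =>
          ⟪t, z.2⟫ - ⟪b t, z.1⟫) ν := h1.sub h2
      have hint : Integrable (fun z : EuclideanSpace ℝ (Fin N) × EuclideanSpace ℝ (Fin d) =>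
          ⟪t, z.2⟫ - ⟪b t, z.1⟫ - ψ z) ν := h12.sub hψ
      have hmono := integral_mono_ae hint (integrable_const (φ t)) hle
      rw [integral_sub h12 hψ, integral_sub h1 h2, hinner2, hinner1,
        integral_const, probReal_univ, one_smul] at hmono
      linarith
    have hint2 : Integrable (fun t => ⟪t, EYm⟫ - ∫ z, ψ z ∂ν) μ :=
      hinnerμint.sub (integrable_const _)
    have step2 : ∫ t, (⟪t, EYm⟫ - ∫ z, ψ z ∂ν) ∂μ ≤ ∫ t, φ t ∂μ := by
      apply integral_mono_ae hint2 hφ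
      filter_upwards [hμae] with t ht using step1 t ht
    rw [integral_sub hinnerμint (integrable_const _), integral_const, probReal_univ,
      one_smul] at step2
    linarith
  -- norm facts in the product space
  have hd1 : ∀ z z' : EuclideanSpace ℝ (Fin N) × EuclideanSpace ℝ (Fin d),
      ‖z.1 - z'.1‖ ≤ dist z z' := by
    intro z z'
    rw [← dist_eq_norm]
    exact (le_max_left _ _).trans_eq Prod.dist_eq.symm
  have hd2 : ∀ z z' : EuclideanSpace ℝ (Fin N) × EuclideanSpace ℝ (Fin d),
      ‖z.2 - z'.2‖ ≤ dist z z' := by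
    intro z z'
    rw [← dist_eq_norm]
    exact (le_max_right _ _).trans_eq Prod.dist_eq.symm
  have hsqd : (0:ℝ) ≤ Real.sqrt d := Real.sqrt_nonneg _
  -- from a continuous triple to an integrable pair with smaller value
  have hAtoB : ∀ r ∈ A, ∃ r' ∈ B, r' ≤ r := by
    rintro r ⟨ψ, φ, b, hψc, hφc, hbc, hcons, rfl⟩
    obtain ⟨Mφ, hMφ⟩ := hcubeC.exists_bound_of_continuousOn hφc
    obtain ⟨Mb, hMb⟩ := hcubeC.exists_bound_of_continuousOn hbc
    have hMb0 : 0 ≤ Mb := (norm_nonneg _).trans (hMb 0 hcube0)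
    -- the sup-potential of (φ, b)
    have hψ1 : ∀ z, ψsup φ b z
        = sSup ((fun t => ⟪t, z.2⟫ - φ t - ⟪b t, z.1⟫) '' cube) := hψsup φ b
    have hbddim : ∀ z : EuclideanSpace ℝ (Fin N) × EuclideanSpace ℝ (Fin d),
        BddAbove ((fun t => ⟪t, z.2⟫ - φ t - ⟪b t, z.1⟫) '' cube) := by
      intro z
      refine ⟨Real.sqrt d * ‖z.2‖ + Mφ + Mb * ‖z.1‖, ?_⟩
      rintro _ ⟨t, ht, rfl⟩
      have e1 : ⟪t, z.2⟫ ≤ Real.sqrt d * ‖z.2‖ :=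
        (real_inner_le_norm t z.2).trans
          (mul_le_mul_of_nonneg_right (hcubenorm t ht) (norm_nonneg _))
      have e2 : |φ t| ≤ Mφ := (Real.norm_eq_abs _ ▸ hMφ t ht)
      have e3 : |⟪b t, z.1⟫| ≤ Mb * ‖z.1‖ :=
        (abs_real_inner_le_norm _ _).trans
          (mul_le_mul_of_nonneg_right (hMb t ht) (norm_nonneg _))
      have := neg_abs_le (φ t)
      have := neg_abs_le ⟪b t, z.1⟫
      simp only []
      linarith
    have hcons1 : ∀ z ∈ S, ∀ t ∈ cube, ψsup φ b z + φ t + ⟪b t, z.1⟫ ≥ ⟪t, z.2⟫ := by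
      intro z hz t ht
      have := le_csSup (hbddim z) (Set.mem_image_of_mem _ ht)
      rw [← hψ1 z] at this
      simp only [ge_iff_le]
      linarith
    have hle1 : ∀ z ∈ S, ψsup φ b z ≤ ψ z := by
      intro z hz
      rw [hψ1 z]
      apply csSup_le (hcubene.image _)
      rintro _ ⟨t, ht, rfl⟩
      have := hcons z hz t ht
      simp only [ge_iff_le] at this
      show ⟪t, z.2⟫ - φ t - ⟪b t, z.1⟫ ≤ ψ z
      linarith
    have hψ1cont : Continuous (ψsup φ b) := by
      have : (ψsup φ b) = fun z => sSup
          ((fun t => (fun (t : EuclideanSpace ℝ (Fin d))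
            (z : EuclideanSpace ℝ (Fin N) × EuclideanSpace ℝ (Fin d)) =>
              ⟪t, z.2⟫ - φ t - ⟪b t, z.1⟫) t z) '' cube) := funext hψ1
      rw [this]
      apply continuous_sSup_of_lipschitz hcubene _ (by positivity : (0:ℝ) ≤ Real.sqrt d + Mb)
        hbddim
      intro t ht z z'
      have e1 : ⟪t, z.2⟫ - ⟪t, z'.2⟫ ≤ Real.sqrt d * dist z z' := by
        rw [← inner_sub_right]
        exact (real_inner_le_norm _ _).trans (mul_le_mul (hcubenorm t ht) (hd2 z z')
          (norm_nonneg _) hsqd)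
      have e2 : ⟪b t, z'.1⟫ - ⟪b t, z.1⟫ ≤ Mb * dist z z' := by
        rw [← inner_sub_right]
        exact (real_inner_le_norm _ _).trans (mul_le_mul (hMb t ht)
          ((norm_sub_rev _ _).trans_le (hd1 z z')) (norm_nonneg _) hMb0)
      have : (Real.sqrt d + Mb) * dist z z' = Real.sqrt d * dist z z' + Mb * dist z z' := by ring
      rw [this]
      linarith
    have hψ1int : Integrable (ψsup φ b) ν := by
      obtain ⟨C1, hC1⟩ := hScomp.exists_bound_of_continuousOn hψ1cont.continuousOn
      exact hIntν _ hψ1cont.aestronglyMeasurable C1 (fun z hz => Real.norm_eq_abs _ ▸ hC1 z hz)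
    have hψm : AEStronglyMeasurable ψ ν := by
      have := hψc.aestronglyMeasurable hSmeas (μ := ν)
      rwa [hrestr] at this
    have hψint : Integrable ψ ν := by
      obtain ⟨C2, hC2⟩ := hScomp.exists_bound_of_continuousOn hψc
      exact hIntν _ hψm C2 (fun z hz => Real.norm_eq_abs _ ▸ hC2 z hz)
    have hφint : Integrable φ μ := by rw [hμ]; exact hφc.integrableOn_compact hcubeC
    have hbint : Integrable b μ := by rw [hμ]; exact hbc.integrableOn_compact hcubeC
    refine ⟨∫ z, ψsup φ b z ∂ν + ∫ t, φ t ∂μ, ⟨φ, b, hφint, hbint, hψ1int, hcons1, rfl⟩, ?_⟩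
    have := integral_mono_ae hψ1int hψint (by filter_upwards [haeS] with z hz using hle1 z hz)
    linarith
  -- norm facts in the other product space
  have hd1' : ∀ p q : EuclideanSpace ℝ (Fin d) × EuclideanSpace ℝ (Fin N),
      ‖p.1 - q.1‖ ≤ dist p q := by
    intro p q
    rw [← dist_eq_norm]
    exact (le_max_left _ _).trans_eq Prod.dist_eq.symm
  have hd2' : ∀ p q : EuclideanSpace ℝ (Fin d) × EuclideanSpace ℝ (Fin N),
      ‖p.2 - q.2‖ ≤ dist p q := by
    intro p q
    rw [← dist_eq_norm]
    exact (le_max_right _ _).trans_eq Prod.dist_eq.symm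
  -- from an integrable pair to a continuous triple, up to ε
  have hBtoA : ∀ r ∈ B, ∀ ε : ℝ, 0 < ε → ∃ r' ∈ A, r' ≤ r + ε := by
    rintro r ⟨φ, b, hφint, hbint, hψint, hcons, rfl⟩ ε hε
    have hψlb : ∀ z ∈ S, -(φ 0 + ‖b 0‖ * Cx) ≤ ψsup φ b z := by
      intro z hz
      have h := hcons z hz 0 hcube0
      simp only [ge_iff_le] at h
      have h0 : ⟪(0 : EuclideanSpace ℝ (Fin d)), z.2⟫ = (0:ℝ) := inner_zero_left _
      have h1 : ⟪b 0, z.1⟫ ≤ ‖b 0‖ * Cx :=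
        (real_inner_le_norm _ _).trans (mul_le_mul_of_nonneg_left (hSsub hz).1 (norm_nonneg _))
      rw [h0] at h
      linarith
    set m₀ : ℝ := φ 0 + ‖b 0‖ * Cx with hm₀
    -- the convexified potential G
    set G := fun (p : EuclideanSpace ℝ (Fin d) × EuclideanSpace ℝ (Fin N)) =>
      sSup ((fun z => ⟪p.1, z.2⟫ - ψsup φ b z - ⟪p.2, z.1⟫) '' S) with hGdef
    have hGbdd : ∀ p : EuclideanSpace ℝ (Fin d) × EuclideanSpace ℝ (Fin N),
        BddAbove ((fun z => ⟪p.1, z.2⟫ - ψsup φ b z - ⟪p.2, z.1⟫) '' S) := by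
      intro p
      refine ⟨‖p.1‖ * Cy + m₀ + ‖p.2‖ * Cx, ?_⟩
      rintro _ ⟨z, hz, rfl⟩
      have e1 : ⟪p.1, z.2⟫ ≤ ‖p.1‖ * Cy := (real_inner_le_norm _ _).trans
        (mul_le_mul_of_nonneg_left (hSsub hz).2 (norm_nonneg _))
      have e2 := hψlb z hz
      have e3 : |⟪p.2, z.1⟫| ≤ ‖p.2‖ * Cx := (abs_real_inner_le_norm _ _).trans
        (mul_le_mul_of_nonneg_left (hSsub hz).1 (norm_nonneg _))
      have e4 := neg_abs_le ⟪p.2, z.1⟫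
      show ⟪p.1, z.2⟫ - ψsup φ b z - ⟪p.2, z.1⟫ ≤ ‖p.1‖ * Cy + m₀ + ‖p.2‖ * Cx
      linarith
    have hGge : ∀ p : EuclideanSpace ℝ (Fin d) × EuclideanSpace ℝ (Fin N), ∀ z ∈ S,
        ⟪p.1, z.2⟫ - ψsup φ b z - ⟪p.2, z.1⟫ ≤ G p := fun p z hz =>
      le_csSup (hGbdd p) (Set.mem_image_of_mem _ hz)
    have hGdiff : ∀ p q : EuclideanSpace ℝ (Fin d) × EuclideanSpace ℝ (Fin N),
        G p ≤ G q + (Cy * ‖p.1 - q.1‖ + Cx * ‖p.2 - q.2‖) := by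
      intro p q
      apply csSup_image_le_add hSne _ _ _ (hGbdd q)
      intro z hz
      have e1 : ⟪p.1, z.2⟫ - ⟪q.1, z.2⟫ ≤ Cy * ‖p.1 - q.1‖ := by
        rw [← inner_sub_left, mul_comm]
        exact (real_inner_le_norm _ _).trans
          (mul_le_mul_of_nonneg_left (hSsub hz).2 (norm_nonneg _))
      have e2 : ⟪q.2, z.1⟫ - ⟪p.2, z.1⟫ ≤ Cx * ‖p.2 - q.2‖ := by
        rw [← inner_sub_left, mul_comm]
        refine (real_inner_le_norm _ _).trans ?_
        rw [norm_sub_rev]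
        exact mul_le_mul_of_nonneg_left (hSsub hz).1 (norm_nonneg _)
      show ⟪p.1, z.2⟫ - ψsup φ b z - ⟪p.2, z.1⟫ ≤
        ⟪q.1, z.2⟫ - ψsup φ b z - ⟪q.2, z.1⟫ + (Cy * ‖p.1 - q.1‖ + Cx * ‖p.2 - q.2‖)
      linarith
    have hGcont : Continuous G := by
      rw [hGdef]
      apply continuous_sSup_of_lipschitz hSne
        (fun z (p : EuclideanSpace ℝ (Fin d) × EuclideanSpace ℝ (Fin N)) =>
          ⟪p.1, z.2⟫ - ψsup φ b z - ⟪p.2, z.1⟫)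
        (by positivity : (0:ℝ) ≤ Cy + Cx) hGbdd
      intro z hz p q
      have e1 : ⟪p.1, z.2⟫ - ⟪q.1, z.2⟫ ≤ Cy * dist p q := by
        rw [← inner_sub_left]
        refine (real_inner_le_norm _ _).trans ?_
        calc ‖p.1 - q.1‖ * ‖z.2‖ ≤ ‖p.1 - q.1‖ * Cy :=
              mul_le_mul_of_nonneg_left (hSsub hz).2 (norm_nonneg _)
          _ ≤ dist p q * Cy := mul_le_mul_of_nonneg_right (hd1' p q) hCy0
          _ = Cy * dist p q := mul_comm _ _
      have e2 : ⟪q.2, z.1⟫ - ⟪p.2, z.1⟫ ≤ Cx * dist p q := by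
        rw [← inner_sub_left]
        refine (real_inner_le_norm _ _).trans ?_
        calc ‖q.2 - p.2‖ * ‖z.1‖ ≤ ‖q.2 - p.2‖ * Cx :=
              mul_le_mul_of_nonneg_left (hSsub hz).1 (norm_nonneg _)
          _ ≤ dist p q * Cx := by
              rw [norm_sub_rev]
              exact mul_le_mul_of_nonneg_right (hd2' p q) hCx0
          _ = Cx * dist p q := mul_comm _ _
      have e3 : (Cy + Cx) * dist p q = Cy * dist p q + Cx * dist p q := by ring
      rw [e3]
      linarith
    -- approximate b in L¹ by a bounded continuous function
    haveI : (volume.restrict cube).WeaklyRegular :=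
      Measure.WeaklyRegular.restrict_of_measure_ne_top
        ((hcubeC.measure_lt_top (μ := volume)).ne)
    have hbint' : Integrable b (volume.restrict cube) := hμ ▸ hbint
    obtain ⟨b', hb'close0, hb'int0⟩ := hbint'.exists_boundedContinuous_integral_sub_le
      (ε := ε / (Cx + 1)) (by positivity)
    have hb'int : Integrable (fun t => b' t) μ := by rw [hμ]; exact hb'int0
    have hb'close : ∫ t, ‖b t - b' t‖ ∂μ ≤ ε / (Cx + 1) := by rw [hμ]; exact hb'close0
    have hMb' : ∀ t, ‖b' t‖ ≤ ‖b'‖ := fun t => b'.norm_coe_le_norm t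
    have hMb'0 : (0:ℝ) ≤ ‖b'‖ := norm_nonneg _
    -- the new φ and ψ
    set φ' := fun t : EuclideanSpace ℝ (Fin d) => G (t, b' t) with hφ'def
    set ψ' := fun z : EuclideanSpace ℝ (Fin N) × EuclideanSpace ℝ (Fin d) =>
      sSup ((fun t => ⟪t, z.2⟫ - φ' t - ⟪b' t, z.1⟫) '' cube) with hψ'def
    have hφ'cont : Continuous φ' := hGcont.comp (continuous_id.prodMk b'.continuous)
    obtain ⟨z₀, hz₀⟩ := id hSne
    have hbddim' : ∀ z : EuclideanSpace ℝ (Fin N) × EuclideanSpace ℝ (Fin d),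
        BddAbove ((fun t => ⟪t, z.2⟫ - φ' t - ⟪b' t, z.1⟫) '' cube) := by
      intro z
      refine ⟨Real.sqrt d * ‖z.2‖ + Real.sqrt d * ‖z₀.2‖ + ψsup φ b z₀
        + ‖b'‖ * ‖z₀.1‖ + ‖b'‖ * ‖z.1‖, ?_⟩
      rintro _ ⟨t, ht, rfl⟩
      have h1 : ⟪t, z₀.2⟫ - ψsup φ b z₀ - ⟪b' t, z₀.1⟫ ≤ φ' t := hGge (t, b' t) z₀ hz₀
      have e1 : ⟪t, z.2⟫ ≤ Real.sqrt d * ‖z.2‖ := (real_inner_le_norm _ _).trans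
        (mul_le_mul_of_nonneg_right (hcubenorm t ht) (norm_nonneg _))
      have e2 : |⟪t, z₀.2⟫| ≤ Real.sqrt d * ‖z₀.2‖ := (abs_real_inner_le_norm _ _).trans
        (mul_le_mul_of_nonneg_right (hcubenorm t ht) (norm_nonneg _))
      have e3 : |⟪b' t, z₀.1⟫| ≤ ‖b'‖ * ‖z₀.1‖ := (abs_real_inner_le_norm _ _).trans
        (mul_le_mul_of_nonneg_right (hMb' t) (norm_nonneg _))
      have e4 : |⟪b' t, z.1⟫| ≤ ‖b'‖ * ‖z.1‖ := (abs_real_inner_le_norm _ _).trans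
        (mul_le_mul_of_nonneg_right (hMb' t) (norm_nonneg _))
      have e5 := neg_abs_le ⟪t, z₀.2⟫
      have e6 := neg_abs_le ⟪b' t, z₀.1⟫
      have e7 := neg_abs_le ⟪b' t, z.1⟫
      have e8 := le_abs_self ⟪b' t, z₀.1⟫
      show ⟪t, z.2⟫ - φ' t - ⟪b' t, z.1⟫ ≤ _
      linarith
    have hcons' : ∀ z ∈ S, ∀ t ∈ cube, ψ' z + φ' t + ⟪b' t, z.1⟫ ≥ ⟪t, z.2⟫ := by
      intro z hz t ht
      have := le_csSup (hbddim' z) (Set.mem_image_of_mem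
        (fun t => ⟪t, z.2⟫ - φ' t - ⟪b' t, z.1⟫) ht)
      simp only [ge_iff_le]
      have h2 : ⟪t, z.2⟫ - φ' t - ⟪b' t, z.1⟫ ≤ ψ' z := this
      linarith
    have hψ'le : ∀ z ∈ S, ψ' z ≤ ψsup φ b z := by
      intro z hz
      apply csSup_le (hcubene.image _)
      rintro _ ⟨t, ht, rfl⟩
      have h2 : ⟪t, z.2⟫ - ψsup φ b z - ⟪b' t, z.1⟫ ≤ φ' t := hGge (t, b' t) z hz
      show ⟪t, z.2⟫ - φ' t - ⟪b' t, z.1⟫ ≤ ψsup φ b z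
      linarith
    have hψ'cont : Continuous ψ' := by
      rw [hψ'def]
      apply continuous_sSup_of_lipschitz hcubene
        (fun t (z : EuclideanSpace ℝ (Fin N) × EuclideanSpace ℝ (Fin d)) =>
          ⟪t, z.2⟫ - φ' t - ⟪b' t, z.1⟫)
        (by positivity : (0:ℝ) ≤ Real.sqrt d + ‖b'‖) hbddim'
      intro t ht z z'
      have e1 : ⟪t, z.2⟫ - ⟪t, z'.2⟫ ≤ Real.sqrt d * dist z z' := by
        rw [← inner_sub_right]
        exact (real_inner_le_norm _ _).trans (mul_le_mul (hcubenorm t ht) (hd2 z z')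
          (norm_nonneg _) hsqd)
      have e2 : ⟪b' t, z'.1⟫ - ⟪b' t, z.1⟫ ≤ ‖b'‖ * dist z z' := by
        rw [← inner_sub_right]
        exact (real_inner_le_norm _ _).trans (mul_le_mul (hMb' t)
          ((norm_sub_rev _ _).trans_le (hd1 z z')) (norm_nonneg _) hMb'0)
      have e3 : (Real.sqrt d + ‖b'‖) * dist z z'
          = Real.sqrt d * dist z z' + ‖b'‖ * dist z z' := by ring
      rw [e3]
      linarith
    have hψ'int : Integrable ψ' ν := by
      obtain ⟨C1, hC1⟩ := hScomp.exists_bound_of_continuousOn hψ'cont.continuousOn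
      exact hIntν _ hψ'cont.aestronglyMeasurable C1 (fun z hz => Real.norm_eq_abs _ ▸ hC1 z hz)
    have hφ'int : Integrable φ' μ := by
      obtain ⟨C2, hC2⟩ := hcubeC.exists_bound_of_continuousOn hφ'cont.continuousOn
      exact hIntμ _ hφ'cont.aestronglyMeasurable C2 (fun t ht => Real.norm_eq_abs _ ▸ hC2 t ht)
    -- value comparison
    have h1 : ∫ z, ψ' z ∂ν ≤ ∫ z, ψsup φ b z ∂ν :=
      integral_mono_ae hψ'int hψint (by filter_upwards [haeS] with z hz using hψ'le z hz)
    have hptw : ∀ t ∈ cube, φ' t ≤ φ t + Cx * ‖b t - b' t‖ := by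
      intro t ht
      have hdiff := hGdiff (t, b' t) (t, b t)
      simp only [sub_self, norm_zero, mul_zero, zero_add] at hdiff
      have hGle : G (t, b t) ≤ φ t := by
        apply csSup_le (hSne.image _)
        rintro _ ⟨z, hz, rfl⟩
        have := hcons z hz t ht
        simp only [ge_iff_le] at this
        show ⟪t, z.2⟫ - ψsup φ b z - ⟪b t, z.1⟫ ≤ φ t
        linarith
      have hrev : ‖(b' t : EuclideanSpace ℝ (Fin N)) - b t‖ = ‖b t - b' t‖ := norm_sub_rev _ _
      calc φ' t = G (t, b' t) := rfl
        _ ≤ G (t, b t) + Cx * ‖(b' t : EuclideanSpace ℝ (Fin N)) - b t‖ := hdiff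
        _ ≤ φ t + Cx * ‖b t - b' t‖ := by
            rw [hrev]
            exact add_le_add_left hGle _
    have hbdiffint : Integrable (fun t => ‖b t - b' t‖) μ := (hbint.sub hb'int).norm
    have hnint : Integrable (fun t => φ t + Cx * ‖b t - b' t‖) μ :=
      hφint.add (hbdiffint.const_mul Cx)
    have h2 : ∫ t, φ' t ∂μ ≤ ∫ t, φ t ∂μ + ε := by
      have hm := integral_mono_ae hφ'int hnint
        (by filter_upwards [hμae] with t ht using hptw t ht)
      rw [integral_add hφint (hbdiffint.const_mul Cx), integral_const_mul] at hm
      have h3 : Cx * ∫ t, ‖b t - b' t‖ ∂μ ≤ Cx * (ε / (Cx + 1)) :=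
        mul_le_mul_of_nonneg_left hb'close hCx0
      have hp : (0:ℝ) < Cx + 1 := by linarith
      have h5 : Cx * (ε / (Cx + 1)) ≤ ε := by
        rw [mul_div_assoc', div_le_iff₀ hp]
        nlinarith [hε.le]
      linarith
    exact ⟨∫ z, ψ' z ∂ν + ∫ t, φ' t ∂μ,
      ⟨ψ', φ', fun t => b' t, hψ'cont.continuousOn, hφ'cont.continuousOn,
        b'.continuous.continuousOn, hcons', rfl⟩, by linarith⟩
  -- A is nonempty
  have hAne : A.Nonempty := by
    set φ₀ := fun t : EuclideanSpace ℝ (Fin d) =>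
      sSup ((fun z : EuclideanSpace ℝ (Fin N) × EuclideanSpace ℝ (Fin d) => ⟪t, z.2⟫) '' S)
      with hφ₀def
    have hbdd₀ : ∀ t : EuclideanSpace ℝ (Fin d),
        BddAbove ((fun z : EuclideanSpace ℝ (Fin N) × EuclideanSpace ℝ (Fin d) =>
          ⟪t, z.2⟫) '' S) := by
      intro t
      refine ⟨‖t‖ * Cy, ?_⟩
      rintro _ ⟨z, hz, rfl⟩
      exact (real_inner_le_norm _ _).trans
        (mul_le_mul_of_nonneg_left (hSsub hz).2 (norm_nonneg _))
    have hφ₀cont : Continuous φ₀ := by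
      rw [hφ₀def]
      apply continuous_sSup_of_lipschitz hSne
        (fun (z : EuclideanSpace ℝ (Fin N) × EuclideanSpace ℝ (Fin d))
          (t : EuclideanSpace ℝ (Fin d)) => ⟪t, z.2⟫) hCy0 hbdd₀
      intro z hz t t'
      rw [← inner_sub_left, mul_comm]
      refine (real_inner_le_norm _ _).trans ?_
      rw [← dist_eq_norm]
      exact mul_le_mul_of_nonneg_left (hSsub hz).2 dist_nonneg
    refine ⟨∫ z, (fun _ => (0:ℝ)) z ∂ν + ∫ t, φ₀ t ∂μ,
      ⟨fun _ => (0:ℝ), φ₀, fun _ => 0, continuous_const.continuousOn, hφ₀cont.continuousOn,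
        continuous_const.continuousOn, ?_, rfl⟩⟩
    intro z hz t ht
    have h1 : ⟪t, z.2⟫ ≤ φ₀ t := le_csSup (hbdd₀ t) (Set.mem_image_of_mem _ hz)
    have h2 : ⟪(0 : EuclideanSpace ℝ (Fin N)), z.1⟫ = (0:ℝ) := inner_zero_left _
    simp only [ge_iff_le, h2]
    linarith
  -- both sets are bounded below by c₀
  have hbddA : BddBelow A := by
    refine ⟨c₀, ?_⟩
    rintro r ⟨ψ, φ, b, hψc, hφc, hbc, hcons, rfl⟩
    have hψm : AEStronglyMeasurable ψ ν := by
      have := hψc.aestronglyMeasurable hSmeas (μ := ν)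
      rwa [hrestr] at this
    have hψint : Integrable ψ ν := by
      obtain ⟨C2, hC2⟩ := hScomp.exists_bound_of_continuousOn hψc
      exact hIntν _ hψm C2 (fun z hz => Real.norm_eq_abs _ ▸ hC2 z hz)
    have hφint : Integrable φ μ := by rw [hμ]; exact hφc.integrableOn_compact hcubeC
    exact hlb ψ φ b hψint hφint hcons
  have hbddB : BddBelow B := by
    refine ⟨c₀, ?_⟩
    rintro r ⟨φ, b, hφint, hbint, hψint, hcons, rfl⟩
    exact hlb (ψsup φ b) φ b hψint hφint hcons
  have hBne : B.Nonempty := by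
    obtain ⟨r, hr⟩ := hAne
    obtain ⟨r', hr', _⟩ := hAtoB r hr
    exact ⟨r', hr'⟩
  -- conclusion
  apply le_antisymm
  · apply le_csInf hBne
    intro r hr
    apply le_of_forall_pos_le_add
    intro ε hε
    obtain ⟨r', hr', hle⟩ := hBtoA r hr ε hε
    exact (csInf_le hbddA hr').trans hle
  · apply le_csInf hAne
    intro r hr
    obtain ⟨r', hr', hle⟩ := hAtoB r hr
    exact (csInf_le hbddB hr').trans hle
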